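/- Let A → M be a Lie algebroid and E, C → M vector bundles. VB-algebroids of type 0 with side bundles A and E and core C are classified up to isomorphism by triples (∇^s, ∇^c, [Ω]), where ∇^s is a flat A-connection on E, ∇^c is a flat A-connection on C, and [Ω] is a cohomology class in H²(A; Hom(E,C)) taken with respect to the flat A-connection on Hom(E,C) induced by ∇^c and ∇^s. -/
import Mathlib


/-!
STATEMENT 15:  Let `A → M` be a Lie algebroid and `E, C → M` vector bundles.
`VB`-algebroids of type 0 (core-anchor `∂ = 0`) with side bundles `A`, `E`
and core `C` are classified up to isomorphism by triples `(∇ˢ, ∇ᶜ, [Ω])`: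
a flat `A`-connection `∇ˢ` on `E`, a flat `A`-connection `∇ᶜ` on `C`, and a
cohomology class `[Ω] ∈ H²(A; Hom(E,C))` with respect to the flat
`A`-connection on `Hom(E,C)` induced by `∇ᶜ` and `∇ˢ`.

We work in the algebraic section-level model: a `VB`-algebroid (with chosen
decomposition) is a flat quadruple `(∂, ∇ᶜ, ∇ˢ, Ω)` (`SCData` + `SCData.Flat`),
type 0 meaning `∂ = 0`; isomorphisms are changes of decomposition
`σ ∈ Ω¹(A; Hom(E,C))` acting by the change-of-lift law (`GaugeRel`).
"Classified by triples" is stated as: (i) every triple consisting of flat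
connections `∇ᶜ`, `∇ˢ` and a `D`-closed `Ω ∈ Ω²(A; Hom(E,C))` is realized
by a type-0 structure; and (ii) two type-0 structures are isomorphic iff
they have the same `∇ˢ` and `∇ᶜ`, and their `Ω`'s are cohomologous, i.e.
differ by `Dσ` for some `σ ∈ Ω¹(A; Hom(E,C))`.
-/
/-- Algebraic (Lie–Rinehart-type) model of a Lie algebroid `A → M`:
the commutative ring `R` plays the role of the smooth functions on the
base `M`, the `R`-module `A` plays the role of the module of sections
of the algebroid, `br` is the Lie bracket and `ρ` the anchor acting on
functions by derivations. -/
structure LAlgd (R : Type) [CommRing R] (A : Type) [AddCommGroup A] [Module R A] where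
  br : A → A → A
  ρ : A → R → R
  br_add_left : ∀ X Y Z, br (X + Y) Z = br X Z + br Y Z
  br_add_right : ∀ X Y Z, br X (Y + Z) = br X Y + br X Z
  br_alt : ∀ X, br X X = 0
  jacobi : ∀ X Y Z, br X (br Y Z) = br (br X Y) Z + br Y (br X Z)
  ρ_add_left : ∀ X Y f, ρ (X + Y) f = ρ X f + ρ Y f
  ρ_smul_left : ∀ (f : R) X g, ρ (f • X) g = f * ρ X g
  ρ_add : ∀ X f g, ρ X (f + g) = ρ X f + ρ X g
  ρ_mul : ∀ X f g, ρ X (f * g) = f * ρ X g + g * ρ X f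
  ρ_br : ∀ X Y f, ρ (br X Y) f = ρ X (ρ Y f) - ρ Y (ρ X f)
  leibniz : ∀ X (f : R) Y, br X (f • Y) = f • br X Y + ρ X f • Y

/-- Component data of a degree-1 `A`-superconnection on the graded bundle
`C[1] ⊕ E` (here `E` and `C` are the `R`-modules of sections of the
corresponding vector bundles):  a bundle map `bd = ∂ : C → E`, an
`A`-connection `cc = ∇ᶜ` on `C`, an `A`-connection `ss = ∇ˢ` on `E`, and a
`Hom(E,C)`-valued alternating 2-form `om = Ω`. -/
structure SCData (R A E C : Type) [CommRing R]
    [AddCommGroup A] [Module R A] [AddCommGroup E] [Module R E]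
    [AddCommGroup C] [Module R C] (L : LAlgd R A) where
  bd : C →ₗ[R] E
  cc : A → C → C
  ss : A → E → E
  om : A →ₗ[R] A →ₗ[R] (E →ₗ[R] C)
  om_alt : ∀ X, om X X = 0
  cc_add_left : ∀ X Y α, cc (X + Y) α = cc X α + cc Y α
  cc_smul_left : ∀ (f : R) X α, cc (f • X) α = f • cc X α
  cc_add_right : ∀ X α β, cc X (α + β) = cc X α + cc X β
  cc_leibniz : ∀ X (f : R) α, cc X (f • α) = f • cc X α + L.ρ X f • α
  ss_add_left : ∀ X Y ε, ss (X + Y) ε = ss X ε + ss Y ε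
  ss_smul_left : ∀ (f : R) X ε, ss (f • X) ε = f • ss X ε
  ss_add_right : ∀ X ε δ, ss X (ε + δ) = ss X ε + ss X δ
  ss_leibniz : ∀ X (f : R) ε, ss X (f • ε) = f • ss X ε + L.ρ X f • ε

variable {R A E C : Type} [CommRing R]
    [AddCommGroup A] [Module R A] [AddCommGroup E] [Module R E]
    [AddCommGroup C] [Module R C] {L : LAlgd R A}

/-- Flatness `𝒟² = 0` of the superconnection `𝒟 = ∂ + Dᶜ + Dˢ + Ω`, in
components: `∂∇ᶜ = ∇ˢ∂`, `Fᶜ = Ω∂`, `Fˢ = ∂Ω`, and `DᶜΩ + ΩDˢ = 0`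
(the covariant differential of `Ω` with respect to the induced connection on
`Hom(E,C)` vanishes). -/
def SCData.Flat (d : SCData R A E C L) : Prop :=
  (∀ X α, d.bd (d.cc X α) = d.ss X (d.bd α)) ∧
  (∀ X Y α, d.cc X (d.cc Y α) - d.cc Y (d.cc X α) - d.cc (L.br X Y) α
      = d.om X Y (d.bd α)) ∧
  (∀ X Y ε, d.ss X (d.ss Y ε) - d.ss Y (d.ss X ε) - d.ss (L.br X Y) ε
      = d.bd (d.om X Y ε)) ∧
  (∀ X Y Z ε,
      d.cc X (d.om Y Z ε) - d.om Y Z (d.ss X ε)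
      + d.cc Y (d.om Z X ε) - d.om Z X (d.ss Y ε)
      + d.cc Z (d.om X Y ε) - d.om X Y (d.ss Z ε)
      - d.om (L.br X Y) Z ε - d.om (L.br Y Z) X ε - d.om (L.br Z X) Y ε = 0)

/-- The covariant differential on `Hom(E,C)`-valued 1-forms of the flat
`A`-connection on `Hom(E,C)` induced by connections `cc` on `C` and `ss` on
`E`: `(Dσ)(X,Y) = ∇^{Hom}_X (σ Y) − ∇^{Hom}_Y (σ X) − σ[X,Y]`, where
`∇^{Hom}_X φ = cc_X ∘ φ − φ ∘ ss_X`. -/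
def homD1 (L : LAlgd R A) (cc : A → C → C) (ss : A → E → E)
    (σ : A →ₗ[R] (E →ₗ[R] C)) (X Y : A) (ε : E) : C :=
  cc X (σ Y ε) - σ Y (ss X ε) - cc Y (σ X ε) + σ X (ss Y ε)
    - σ (L.br X Y) ε

/-- The covariant differential on `Hom(E,C)`-valued 2-forms. -/
def homD2 (L : LAlgd R A) (cc : A → C → C) (ss : A → E → E)
    (om : A →ₗ[R] A →ₗ[R] (E →ₗ[R] C)) (X Y Z : A) (ε : E) : C :=
  cc X (om Y Z ε) - om Y Z (ss X ε)
    + cc Y (om Z X ε) - om Z X (ss Y ε)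
    + cc Z (om X Y ε) - om X Y (ss Z ε)
    - om (L.br X Y) Z ε - om (L.br Y Z) X ε - om (L.br Z X) Y ε

/-- The action of a change of decomposition `σ ∈ Ω¹(A; Hom(E,C))` on the
superconnection data (the change-of-lift transformation law). -/
def GaugeRel (q q' : SCData R A E C L) (σ : A →ₗ[R] (E →ₗ[R] C)) : Prop :=
  q'.bd = q.bd ∧
  (∀ X α, q'.cc X α = q.cc X α + σ X (q.bd α)) ∧
  (∀ X ε, q'.ss X ε = q.ss X ε + q.bd (σ X ε)) ∧
  (∀ X Y ε, q'.om X Y ε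
    = q.om X Y ε + σ (L.br X Y) ε
      - σ X (q.ss Y ε) + σ Y (q.ss X ε)
      - q.cc X (σ Y ε) + q.cc Y (σ X ε)
      - σ X (q.bd (σ Y ε)) - σ Y (q.bd (σ X ε)))

/-- classification of type-0 `VB`-algebroids with sides `A`,
`E` and core `C` up to isomorphism by triples `(∇ˢ, ∇ᶜ, [Ω])`. -/
theorem type0_vbalgebroid_classification
    (R A E C : Type) [CommRing R]
    [AddCommGroup A] [Module R A] [AddCommGroup E] [Module R E]
    [AddCommGroup C] [Module R C] (L : LAlgd R A) :
    -- (i) realization: every triple `(∇ˢ, ∇ᶜ, Ω)` with `∇ᶜ`, `∇ˢ` flat and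
    -- `DΩ = 0` arises from a type-0 `VB`-algebroid
    (∀ (cc : A → C → C),
      (∀ X Y α, cc (X + Y) α = cc X α + cc Y α) →
      (∀ (f : R) X α, cc (f • X) α = f • cc X α) →
      (∀ X α β, cc X (α + β) = cc X α + cc X β) →
      (∀ X (f : R) α, cc X (f • α) = f • cc X α + L.ρ X f • α) →
      (∀ X Y α, cc X (cc Y α) - cc Y (cc X α) = cc (L.br X Y) α) →
      ∀ (ss : A → E → E),
      (∀ X Y ε, ss (X + Y) ε = ss X ε + ss Y ε) →
      (∀ (f : R) X ε, ss (f • X) ε = f • ss X ε) →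
      (∀ X ε δ, ss X (ε + δ) = ss X ε + ss X δ) →
      (∀ X (f : R) ε, ss X (f • ε) = f • ss X ε + L.ρ X f • ε) →
      (∀ X Y ε, ss X (ss Y ε) - ss Y (ss X ε) = ss (L.br X Y) ε) →
      ∀ (om : A →ₗ[R] A →ₗ[R] (E →ₗ[R] C)),
      (∀ X, om X X = 0) →
      (∀ X Y Z ε, homD2 L cc ss om X Y Z ε = 0) →
      ∃ q : SCData R A E C L,
        q.bd = 0 ∧ q.Flat ∧ q.cc = cc ∧ q.ss = ss ∧ q.om = om) ∧
    -- (ii) two type-0 structures are isomorphic iff they have the same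
    -- side and core connections and cohomologous `Ω`'s
    (∀ q q' : SCData R A E C L, q.bd = 0 → q'.bd = 0 → q.Flat → q'.Flat →
      ((∃ σ : A →ₗ[R] (E →ₗ[R] C), GaugeRel q q' σ) ↔
        (q.cc = q'.cc ∧ q.ss = q'.ss ∧
          ∃ σ : A →ₗ[R] (E →ₗ[R] C),
            ∀ X Y ε, q'.om X Y ε = q.om X Y ε + homD1 L q.cc q.ss σ X Y ε))) := by

  constructor
  · intro cc hcc1 hcc2 hcc3 hcc4 hcc5 ss hss1 hss2 hss3 hss4 hss5 om halt hD2
    have hss0 : ∀ X, ss X 0 = 0 := by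
      intro X
      have h : ss X 0 = ss X 0 + ss X 0 := by
        have := hss3 X 0 0; simpa using this
      exact (left_eq_add.mp h)
    refine ⟨⟨0, cc, ss, om, halt, hcc1, hcc2, hcc3, hcc4, hss1, hss2, hss3, hss4⟩,
      rfl, ?_, rfl, rfl, rfl⟩
    refine ⟨?_, ?_, ?_, ?_⟩
    · intro X α
      simp [hss0]
    · intro X Y α
      simp only [LinearMap.zero_apply, map_zero]
      exact sub_eq_zero.mpr (hcc5 X Y α)
    · intro X Y ε
      simp only [LinearMap.zero_apply, map_zero]
      exact sub_eq_zero.mpr (hss5 X Y ε)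
    · intro X Y Z ε
      exact hD2 X Y Z ε
  · intro q q' hq hq' _ _
    have ccneg : ∀ X α, q.cc X (-α) = - q.cc X α := by
      intro X α
      have h0 : q.cc X 0 = 0 := by
        have h := q.cc_add_right X 0 0
        simp only [add_zero] at h
        exact (left_eq_add.mp h)
      have h := q.cc_add_right X α (-α)
      rw [add_neg_cancel, h0] at h
      exact (eq_neg_of_add_eq_zero_right h.symm)
    constructor
    · rintro ⟨σ, h0, h1, h2, h3⟩
      refine ⟨?_, ?_, -σ, ?_⟩
      · funext X α
        have := h1 X α
        rw [hq] at this
        simp only [LinearMap.zero_apply, map_zero, add_zero] at this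
        exact this.symm
      · funext X ε
        have := h2 X ε
        rw [hq] at this
        simp only [LinearMap.zero_apply, map_zero, add_zero] at this
        exact this.symm
      · intro X Y ε
        have := h3 X Y ε
        rw [hq] at this
        simp only [LinearMap.zero_apply, map_zero, sub_zero] at this
        rw [this]
        simp only [homD1, LinearMap.neg_apply, map_neg, ccneg]
        abel
    · rintro ⟨hcc, hss, σ, hom⟩
      refine ⟨-σ, ?_, ?_, ?_, ?_⟩
      · rw [hq, hq']
      · intro X α
        rw [hq]
        simp only [LinearMap.zero_apply, map_zero, add_zero]
        rw [hcc]
      · intro X ε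
        rw [hq]
        simp only [LinearMap.zero_apply, map_zero, add_zero]
        rw [hss]
      · intro X Y ε
        rw [hom X Y ε, hq]
        simp only [homD1, LinearMap.neg_apply, map_neg, LinearMap.zero_apply,
          map_zero, neg_zero, sub_zero, ccneg]
        abel
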